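/- Let f : ℝ^n → ℝ^n be locally Lipschitz, H ⊆ ℝ^n, Ξ ⊆ H, and P ⊆ ℝ^n. Then P is a continuous invariant of (H, f, Ξ) if and only if: (1) Ξ ⊆ P; (2) every x ∈ P ∩ H ∩ In_f(H) lies in In_f(P); and (3) every x ∈ P^c ∩ H ∩ IvIn_f(H) lies outside IvIn_f(P). -/

import Mathlib

/-- `φ` is a global flow of the vector field `f`: `φ x₀ t` is the value at time `t`
of the solution of `ẋ = f(x)` with initial value `x₀`. -/
def IsFlow {n : ℕ} (f : (Fin n → ℝ) → (Fin n → ℝ))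
    (φ : (Fin n → ℝ) → ℝ → (Fin n → ℝ)) : Prop :=
  (∀ x₀, φ x₀ 0 = x₀) ∧ ∀ x₀ t, HasDerivAt (φ x₀) (f (φ x₀ t)) t

/-- `In_f(A)`: points whose forward trajectory enters `A` immediately. -/
def InSet {n : ℕ} (φ : (Fin n → ℝ) → ℝ → (Fin n → ℝ)) (A : Set (Fin n → ℝ)) :
    Set (Fin n → ℝ) :=
  {x₀ | ∃ ε > 0, ∀ t ∈ Set.Ioo (0:ℝ) ε, φ x₀ t ∈ A}

/-- `IvIn_f(A)`: points whose backward trajectory comes from inside `A`. -/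
def IvInSet {n : ℕ} (φ : (Fin n → ℝ) → ℝ → (Fin n → ℝ)) (A : Set (Fin n → ℝ)) :
    Set (Fin n → ℝ) :=
  {x₀ | ∃ ε > 0, ∀ t ∈ Set.Ioo (0:ℝ) ε, φ x₀ (-t) ∈ A}

/-- `Out_f(A)`: points whose forward trajectory leaves `A` immediately. -/
def OutSet {n : ℕ} (φ : (Fin n → ℝ) → ℝ → (Fin n → ℝ)) (A : Set (Fin n → ℝ)) :
    Set (Fin n → ℝ) :=
  {x₀ | ∃ ε > 0, ∀ t ∈ Set.Ioo (0:ℝ) ε, φ x₀ t ∉ A}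

/-- `P` is a continuous invariant of the system `(H, f, Ξ)` with flow `φ`. -/
def ContinuousInvariant {n : ℕ} (φ : (Fin n → ℝ) → ℝ → (Fin n → ℝ))
    (H Ξ P : Set (Fin n → ℝ)) : Prop :=
  Ξ ⊆ P ∧ ∀ x₀ ∈ P, ∀ T : ℝ, 0 ≤ T →
    (∀ t ∈ Set.Icc 0 T, φ x₀ t ∈ H) → ∀ t ∈ Set.Icc 0 T, φ x₀ t ∈ P

private lemma flow_unique {n : ℕ} {f : (Fin n → ℝ) → (Fin n → ℝ)} (hf : LocallyLipschitz f)
    {φ : (Fin n → ℝ) → ℝ → (Fin n → ℝ)} (hφ : IsFlow f φ)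
    {g : ℝ → (Fin n → ℝ)} (hg : ∀ t, HasDerivAt g (f (g t)) t)
    (x : Fin n → ℝ) (h0 : g 0 = φ x 0) : ∀ t, g t = φ x t := by
  have hgc : Continuous g := continuous_iff_continuousAt.2 fun t => (hg t).continuousAt
  have hφc : Continuous (φ x) := continuous_iff_continuousAt.2 fun t => (hφ.2 x t).continuousAt
  have hco : IsClopen {t : ℝ | g t = φ x t} := by
    constructor
    · exact isClosed_eq hgc hφc
    · rw [isOpen_iff_mem_nhds]
      intro t₀ ht₀
      obtain ⟨K, s, hs, hK⟩ := hf (g t₀)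
      have hs' : s ∈ nhds (φ x t₀) := by rwa [← ht₀]
      have hev : g =ᶠ[nhds t₀] φ x := by
        refine ODE_solution_unique_of_eventually (v := fun _ y => f y) (s := fun _ => s)
          (Filter.Eventually.of_forall fun _ => hK) ?_ ?_ ht₀
        · filter_upwards [(hg t₀).continuousAt.preimage_mem_nhds hs] with t ht
          exact ⟨hg t, ht⟩
        · filter_upwards [(hφ.2 x t₀).continuousAt.preimage_mem_nhds hs'] with t ht
          exact ⟨hφ.2 x t, ht⟩
      exact hev
  have : {t : ℝ | g t = φ x t} = Set.univ :=
    (isClopen_iff.mp hco).resolve_left (Set.nonempty_iff_ne_empty.mp ⟨0, h0⟩)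
  intro t
  exact (Set.eq_univ_iff_forall.mp this) t

private lemma flow_add {n : ℕ} {f : (Fin n → ℝ) → (Fin n → ℝ)} (hf : LocallyLipschitz f)
    {φ : (Fin n → ℝ) → ℝ → (Fin n → ℝ)} (hφ : IsFlow f φ)
    (x : Fin n → ℝ) (s t : ℝ) : φ (φ x s) t = φ x (s + t) := by
  have hg : ∀ t : ℝ, HasDerivAt (fun u : ℝ => φ x (s + u)) (f (φ x (s + t))) t := by
    intro t
    have hh : HasDerivAt (fun u : ℝ => s + u) 1 t := (hasDerivAt_id t).const_add s
    have := (hφ.2 x (s + t)).scomp t hh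
    simpa [Function.comp_def] using this
  have h0 : φ x (s + 0) = φ (φ x s) 0 := by rw [add_zero, hφ.1]
  exact (flow_unique hf hφ hg (φ x s) h0 t).symm

/-- **Necessary and sufficient condition for continuous invariants.** -/
theorem continuous_invariant_iff
    {n : ℕ} (f : (Fin n → ℝ) → (Fin n → ℝ)) (hf : LocallyLipschitz f)
    (φ : (Fin n → ℝ) → ℝ → (Fin n → ℝ)) (hφ : IsFlow f φ)
    (H Ξ P : Set (Fin n → ℝ)) (hΞH : Ξ ⊆ H) :
    ContinuousInvariant φ H Ξ P ↔
      (Ξ ⊆ P ∧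
       (∀ x ∈ P ∩ H ∩ InSet φ H, x ∈ InSet φ P) ∧
       (∀ x ∈ Pᶜ ∩ H ∩ IvInSet φ H, x ∉ IvInSet φ P)) := by
  have hadd : ∀ x s t, φ (φ x s) t = φ x (s + t) := fun x s t => flow_add hf hφ x s t
  constructor
  · rintro ⟨h1, h2⟩
    refine ⟨h1, ?_, ?_⟩
    · rintro x ⟨⟨hxP, hxH⟩, ε, hε, hH⟩
      refine ⟨ε, hε, fun t ht => ?_⟩
      refine h2 x hxP t ht.1.le (fun s hs => ?_) t ⟨ht.1.le, le_rfl⟩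
      rcases eq_or_lt_of_le hs.1 with h | h
      · rw [← h, hφ.1]; exact hxH
      · exact hH s ⟨h, lt_of_le_of_lt hs.2 ht.2⟩
    · rintro x ⟨⟨hxP, hxH⟩, ε, hε, hH⟩ ⟨δ, hδ, hP⟩
      have hm1 := min_le_left ε δ
      have hm2 := min_le_right ε δ
      have hmin : 0 < min ε δ := lt_min hε hδ
      set t := min ε δ / 2 with ht_def
      have ht0 : 0 < t := by positivity
      have htε : t < ε := by rw [ht_def]; linarith
      have htδ : t < δ := by rw [ht_def]; linarith
      have hy : φ x (-t) ∈ P := hP t ⟨ht0, htδ⟩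
      have hforward : ∀ s ∈ Set.Icc (0:ℝ) t, φ (φ x (-t)) s ∈ H := by
        intro s hs
        rw [hadd]
        rcases eq_or_lt_of_le hs.2 with h | h
        · rw [h]
          have : -t + t = (0:ℝ) := by ring
          rw [this, hφ.1]; exact hxH
        · have heq : -t + s = -(t - s) := by ring
          rw [heq]
          exact hH (t - s) ⟨by linarith [h], by linarith [hs.1]⟩
      have hfin := h2 _ hy t ht0.le hforward t ⟨ht0.le, le_rfl⟩
      rw [hadd] at hfin
      have : -t + t = (0:ℝ) := by ring
      rw [this, hφ.1] at hfin
      exact hxP hfin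
  · rintro ⟨h1, h2, h3⟩
    refine ⟨h1, ?_⟩
    intro x₀ hx₀ T hT hH
    by_contra hcon
    push_neg at hcon
    obtain ⟨t₁, ht₁, ht₁P⟩ := hcon
    set B := {t : ℝ | t ∈ Set.Icc 0 T ∧ φ x₀ t ∉ P} with hB_def
    have hBne : B.Nonempty := ⟨t₁, ht₁, ht₁P⟩
    have hBbd : BddBelow B := ⟨0, fun b hb => hb.1.1⟩
    set τ := sInf B with hτ_def
    have hτ0 : 0 ≤ τ := le_csInf hBne fun b hb => hb.1.1
    have hτT : τ ≤ T := le_trans (csInf_le hBbd ⟨ht₁, ht₁P⟩) ht₁.2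
    have key : ∀ s, 0 ≤ s → s < τ → φ x₀ s ∈ P := by
      intro s hs0 hsτ
      by_contra hsP
      exact absurd (csInf_le hBbd ⟨⟨hs0, hsτ.le.trans hτT⟩, hsP⟩) (not_le.2 hsτ)
    by_cases hc : φ x₀ τ ∈ P
    · have hτT' : τ < T := by
        rcases eq_or_lt_of_le hτT with h | h
        · exfalso
          obtain ⟨b, hbB⟩ := hBne
          have hbτ : b = τ := le_antisymm (h ▸ hbB.1.2) (csInf_le hBbd hbB)
          exact hbB.2 (hbτ ▸ hc)
        · exact h
      have hyIn : φ x₀ τ ∈ InSet φ H := by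
        refine ⟨T - τ, by linarith, fun s hs => ?_⟩
        rw [hadd]
        exact hH (τ + s) ⟨by linarith [hs.1], by linarith [hs.2]⟩
      obtain ⟨ε, hε, hPin⟩ := h2 (φ x₀ τ) ⟨⟨hc, hH τ ⟨hτ0, hτT⟩⟩, hyIn⟩
      have hex : ∃ b ∈ B, b < τ + ε := by
        by_contra hcon2
        push_neg at hcon2
        have : τ + ε ≤ τ := le_csInf hBne hcon2
        linarith
      obtain ⟨b, hbB, hbε⟩ := hex
      have hτb : τ ≤ b := csInf_le hBbd hbB
      have hbτ : τ < b := lt_of_le_of_ne hτb (fun h => hbB.2 (h ▸ hc))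
      have hmem := hPin (b - τ) ⟨by linarith, by linarith⟩
      rw [hadd] at hmem
      have : τ + (b - τ) = b := by ring
      rw [this] at hmem
      exact hbB.2 hmem
    · have hτ0' : 0 < τ := by
        rcases eq_or_lt_of_le hτ0 with h | h
        · exfalso; apply hc; rw [← h, hφ.1]; exact hx₀
        · exact h
      have hzIv : φ x₀ τ ∈ IvInSet φ H := by
        refine ⟨τ, hτ0', fun s hs => ?_⟩
        rw [hadd]
        exact hH (τ + -s) ⟨by linarith [hs.2], by linarith [hs.1]⟩
      refine h3 (φ x₀ τ) ⟨⟨hc, hH τ ⟨hτ0, hτT⟩⟩, hzIv⟩ ?_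
      refine ⟨τ, hτ0', fun s hs => ?_⟩
      rw [hadd]
      exact key (τ + -s) (by linarith [hs.2]) (by linarith [hs.1])
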